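/- Jacobi's identity on minors: for any n×n matrix A over a commutative ring, indices i_1 < ⋯ < i_r and j_1 < ⋯ < j_r in {0,…,n−1}, det(A)^{r−1} · det(A_{i_1,…,i_r}^{j_1,…,j_r}) = det(B), where B is the r×r matrix with entry B_{u,v} = det(A_{i_u}^{j_v}). -/

import Mathlib

section JacobiAux

open Matrix Equiv


private lemma jac_block_key {R : Type*} [CommRing R] {r s : ℕ}
    (N : Matrix (Fin r ⊕ Fin s) (Fin r ⊕ Fin s) R) :
    N.det * (Matrix.of fun u v : Fin r => N.adjugate (Sum.inl u) (Sum.inl v)).det =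
      N.det ^ r * N.toBlocks₂₂.det := by
  classical
  set C := N.adjugate with hC
  have hmul : N * C = N.det • 1 := Matrix.mul_adjugate N
  have e1 : (N * C).toBlocks₁₁ =
      N.toBlocks₁₁ * C.toBlocks₁₁ + N.toBlocks₁₂ * C.toBlocks₂₁ := by
    conv_lhs => rw [← Matrix.fromBlocks_toBlocks N, ← Matrix.fromBlocks_toBlocks C]
    rw [Matrix.fromBlocks_multiply, Matrix.toBlocks_fromBlocks₁₁]
  have e2 : (N * C).toBlocks₂₁ =
      N.toBlocks₂₁ * C.toBlocks₁₁ + N.toBlocks₂₂ * C.toBlocks₂₁ := by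
    conv_lhs => rw [← Matrix.fromBlocks_toBlocks N, ← Matrix.fromBlocks_toBlocks C]
    rw [Matrix.fromBlocks_multiply, Matrix.toBlocks_fromBlocks₂₁]
  have f1 : (N * C).toBlocks₁₁ = N.det • (1 : Matrix (Fin r) (Fin r) R) := by
    rw [hmul]; ext u v
    simp [Matrix.toBlocks₁₁, Matrix.one_apply, Matrix.smul_apply]
  have f2 : (N * C).toBlocks₂₁ = 0 := by
    rw [hmul]; ext u v
    simp [Matrix.toBlocks₂₁, Matrix.one_apply, Matrix.smul_apply]
  have g1 : N.toBlocks₁₁ * C.toBlocks₁₁ + N.toBlocks₁₂ * C.toBlocks₂₁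
      = N.det • (1 : Matrix (Fin r) (Fin r) R) := e1.symm.trans f1
  have g2 : N.toBlocks₂₁ * C.toBlocks₁₁ + N.toBlocks₂₂ * C.toBlocks₂₁ = 0 := e2.symm.trans f2
  have key : N * Matrix.fromBlocks C.toBlocks₁₁ 0 C.toBlocks₂₁ 1 =
      Matrix.fromBlocks (N.det • 1) N.toBlocks₁₂ 0 N.toBlocks₂₂ := by
    conv_lhs => rw [← Matrix.fromBlocks_toBlocks N]
    rw [Matrix.fromBlocks_multiply, Matrix.mul_zero, Matrix.mul_zero, Matrix.mul_one,
      Matrix.mul_one, zero_add, zero_add, g1, g2]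
  have hdet := congrArg Matrix.det key
  rw [Matrix.det_mul, Matrix.det_fromBlocks_zero₁₂, Matrix.det_fromBlocks_zero₂₁,
    Matrix.det_one, mul_one, Matrix.det_smul, Matrix.det_one, mul_one,
    Fintype.card_fin] at hdet
  have : C.toBlocks₁₁ = (Matrix.of fun u v : Fin r => N.adjugate (Sum.inl u) (Sum.inl v)) := rfl
  rw [this] at hdet
  exact hdet

private lemma jac_block_key' {R : Type*} [CommRing R] {r s : ℕ} (hr : 1 ≤ r)
    (N : Matrix (Fin r ⊕ Fin s) (Fin r ⊕ Fin s) R) :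
    N.det ^ (r - 1) * N.toBlocks₂₂.det =
      (Matrix.of fun u v : Fin r => N.adjugate (Sum.inl u) (Sum.inl v)).det := by
  classical
  obtain ⟨k, rfl⟩ : ∃ k, r = k + 1 := ⟨r - 1, (Nat.succ_pred_eq_of_pos hr).symm⟩
  simp only [Nat.add_sub_cancel]
  set X : Matrix (Fin (k+1) ⊕ Fin s) (Fin (k+1) ⊕ Fin s) (MvPolynomial ((Fin (k+1) ⊕ Fin s) × (Fin (k+1) ⊕ Fin s)) ℤ) :=
    Matrix.mvPolynomialX (Fin (k+1) ⊕ Fin s) (Fin (k+1) ⊕ Fin s) ℤ with hX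
  have hd : X.det ≠ 0 := Matrix.det_mvPolynomialX_ne_zero (Fin (k+1) ⊕ Fin s) ℤ
  have hgen : X.det ^ k * X.toBlocks₂₂.det =
      (Matrix.of fun u v : Fin (k+1) => X.adjugate (Sum.inl u) (Sum.inl v)).det := by
    have h := jac_block_key X
    have hrr : X.det ^ (k + 1) = X.det * X.det ^ k := by rw [pow_succ']
    rw [hrr, mul_assoc] at h
    exact (mul_left_cancel₀ hd h.symm)
  -- transfer to R via evaluation
  set φ : MvPolynomial ((Fin (k+1) ⊕ Fin s) × (Fin (k+1) ⊕ Fin s)) ℤ →+* R :=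
    (MvPolynomial.eval₂Hom (Int.castRingHom R) (fun p => N p.1 p.2)) with hφ
  have hXN : X.map ⇑φ = N := by
    rw [hφ]
    exact Matrix.mvPolynomialX_map_eval₂ (Int.castRingHom R) N
  have := congrArg φ hgen
  rw [_root_.map_mul, map_pow, RingHom.map_det, RingHom.mapMatrix_apply, hXN] at this
  have h22 : φ X.toBlocks₂₂.det = N.toBlocks₂₂.det := by
    rw [RingHom.map_det, RingHom.mapMatrix_apply]
    congr 1
    ext k l
    show φ (X (Sum.inr k) (Sum.inr l)) = N.toBlocks₂₂ k l
    rw [show φ (X (Sum.inr k) (Sum.inr l)) = (X.map ⇑φ) (Sum.inr k) (Sum.inr l) from rfl, hXN]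
    rfl
  have hadj : φ (Matrix.of fun u v : Fin (k+1) => X.adjugate (Sum.inl u) (Sum.inl v)).det =
      (Matrix.of fun u v : Fin (k+1) => N.adjugate (Sum.inl u) (Sum.inl v)).det := by
    rw [RingHom.map_det, RingHom.mapMatrix_apply]
    congr 1
    ext u v
    show φ (X.adjugate (Sum.inl u) (Sum.inl v)) = N.adjugate (Sum.inl u) (Sum.inl v)
    have h2 := congrFun (congrFun (φ.map_adjugate X) (Sum.inl u)) (Sum.inl v)
    rw [RingHom.mapMatrix_apply, RingHom.mapMatrix_apply] at h2
    rw [show φ (X.adjugate (Sum.inl u) (Sum.inl v)) = (X.adjugate.map ⇑φ) (Sum.inl u) (Sum.inl v) from rfl, h2, hXN]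
  rw [h22, hadj] at this
  exact this


private lemma jac_sign_shuffle : ∀ (r : ℕ) {n : ℕ} (i j : Fin r → Fin n),
    StrictMono i → StrictMono j → ∀ (τ : Equiv.Perm (Fin n)),
    (∀ u, τ (i u) = j u) →
    (∀ x y, x ∉ Set.range i → y ∉ Set.range i → x ≤ y → τ x ≤ τ y) →
    Equiv.Perm.sign τ = (-1) ^ ∑ u, ((i u : ℕ) + (j u : ℕ)) := by
  intro r
  induction r with
  | zero =>
    intro n i j hi hj τ hτ hmono
    have hm : Monotone ⇑τ := by
      intro x y hxy
      exact hmono x y (by simp) (by simp) hxy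
    have hsm : StrictMono ⇑τ := hm.strictMono_of_injective τ.injective
    have hsm' : StrictMono ⇑τ.symm := by
      intro x y hxy
      rw [← hsm.lt_iff_lt]
      simpa using hxy
    have hτ1 : τ = 1 := by
      haveI : WellFoundedLT (Fin n) := Finite.to_wellFoundedLT
      ext x
      have h1 : x ≤ τ x := hsm.le_apply
      have h2 : τ x ≤ τ.symm (τ x) := hsm'.le_apply
      rw [Equiv.symm_apply_apply] at h2
      have h3 := le_antisymm h2 h1
      simp [h3]
    simp [hτ1]
  | succ r IH =>
    intro n i j hi hj τ hτ hmono
    match n with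
    | 0 => exact (i 0).elim0
    | (m+1) =>
    set a := i 0 with ha
    set b := j 0 with hb
    set ρ : Equiv.Perm (Fin (m+1)) := Fin.cycleRange b * (τ * (Fin.cycleRange a)⁻¹) with hρ
    have hρ0 : ρ 0 = 0 := by
      have h1 : (Fin.cycleRange a)⁻¹ 0 = a := by
        rw [Equiv.Perm.inv_eq_iff_eq]
        exact (Fin.cycleRange_self a).symm
      simp only [hρ, Equiv.Perm.mul_apply, h1, hτ 0, ← hb, Fin.cycleRange_self]
      exact (congrArg _ (hτ 0)).trans (Fin.cycleRange_self b)
    set ρ' : Equiv.Perm (Fin m) := (Equiv.Perm.decomposeFin ρ).2 with hρ'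
    have hfst : (Equiv.Perm.decomposeFin ρ).1 = 0 := by
      have h1 := Equiv.Perm.decomposeFin_symm_apply_zero
        (p := (Equiv.Perm.decomposeFin ρ).1) (e := (Equiv.Perm.decomposeFin ρ).2)
      rw [Prod.mk.eta, Equiv.symm_apply_apply] at h1
      rw [← h1, hρ0]
    have hρdec : ρ = Equiv.Perm.decomposeFin.symm (0, ρ') := by
      rw [← hfst, hρ', Prod.mk.eta, Equiv.symm_apply_apply]
    have hsucc : ∀ x : Fin m, ρ x.succ = (ρ' x).succ := by
      intro x
      rw [hρdec, Equiv.Perm.decomposeFin_symm_apply_succ]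
      simp
    have keyAbove : ∀ x : Fin m, b.succAbove (ρ' x) = τ (a.succAbove x) := by
      intro x
      have h1 : (Fin.cycleRange a)⁻¹ x.succ = a.succAbove x := by
        rw [Equiv.Perm.inv_eq_iff_eq]
        exact (Fin.cycleRange_succAbove a x).symm
      have h2 : ρ x.succ = Fin.cycleRange b (τ (a.succAbove x)) := by
        simp only [hρ, Equiv.Perm.mul_apply, h1]
      have h3 : ρ x.succ = Fin.cycleRange b (b.succAbove (ρ' x)) := by
        rw [hsucc x, Fin.cycleRange_succAbove]
      exact (Fin.cycleRange b).injective (h3.symm.trans h2)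
    have hne : ∀ u : Fin r, i u.succ ≠ a := fun u => (hi (Fin.succ_pos u)).ne'
    have hne' : ∀ u : Fin r, j u.succ ≠ b := fun u => (hj (Fin.succ_pos u)).ne'
    choose i' hi' using fun u => Fin.exists_succAbove_eq (hne u)
    choose j' hj' using fun u => Fin.exists_succAbove_eq (hne' u)
    have hsmi' : StrictMono i' := by
      intro u v huv
      have h1 : a.succAbove (i' u) < a.succAbove (i' v) := by
        rw [hi' u, hi' v]; exact hi (Fin.succ_lt_succ_iff.mpr huv)
      exact (Fin.strictMono_succAbove a).lt_iff_lt.mp h1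
    have hsmj' : StrictMono j' := by
      intro u v huv
      have h1 : b.succAbove (j' u) < b.succAbove (j' v) := by
        rw [hj' u, hj' v]; exact hj (Fin.succ_lt_succ_iff.mpr huv)
      exact (Fin.strictMono_succAbove b).lt_iff_lt.mp h1
    have hτ' : ∀ u, ρ' (i' u) = j' u := by
      intro u
      apply Fin.succAbove_right_injective (p := b)
      rw [keyAbove (i' u), hi' u, hτ u.succ, hj' u]
    have hmono' : ∀ x y, x ∉ Set.range i' → y ∉ Set.range i' → x ≤ y → ρ' x ≤ ρ' y := by
      intro x y hx hy hxy
      have hax : ∀ z : Fin m, z ∉ Set.range i' → a.succAbove z ∉ Set.range i := by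
        rintro z hz ⟨w, hw⟩
        rcases Fin.eq_zero_or_eq_succ w with rfl | ⟨u, rfl⟩
        · exact Fin.succAbove_ne a z hw.symm
        · exact hz ⟨u, Fin.succAbove_right_injective (p := a) ((hi' u).trans hw)⟩
      have h1 := hmono _ _ (hax x hx) (hax y hy) ((Fin.strictMono_succAbove a).le_iff_le.mpr hxy)
      rw [← keyAbove x, ← keyAbove y] at h1
      exact (Fin.strictMono_succAbove b).le_iff_le.mp h1
    have IHval := IH i' j' hsmi' hsmj' ρ' hτ' hmono'
    have hsρ : Equiv.Perm.sign ρ = Equiv.Perm.sign ρ' := by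
      rw [hρdec, Equiv.Perm.decomposeFin.symm_sign, if_pos rfl, one_mul]
    have hA : Equiv.Perm.sign ρ =
        (-1 : ℤˣ) ^ (b : ℕ) * (Equiv.Perm.sign τ * (-1 : ℤˣ) ^ (a : ℕ)) := by
      rw [hρ, _root_.map_mul, _root_.map_mul, map_inv, Fin.sign_cycleRange, Fin.sign_cycleRange,
        ← inv_pow, Int.units_inv_eq_self]
    have h : (-1 : ℤˣ) ^ (b : ℕ) * (Equiv.Perm.sign τ * (-1 : ℤˣ) ^ (a : ℕ)) =
        (-1 : ℤˣ) ^ ∑ u : Fin r, ((i' u : ℕ) + (j' u : ℕ)) :=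
      hA.symm.trans (hsρ.trans IHval)
    have hval : ∀ u : Fin r, (i u.succ : ℕ) = (i' u : ℕ) + 1 := by
      intro u
      have h2 : a < a.succAbove (i' u) := by rw [hi' u]; exact hi (Fin.succ_pos u)
      have h3 : a ≤ Fin.castSucc (i' u) := by
        by_contra hcon
        push_neg at hcon
        rw [Fin.succAbove_of_castSucc_lt a (i' u) hcon] at h2
        exact absurd (h2.trans hcon) (lt_irrefl _)
      rw [← hi' u, Fin.succAbove_of_le_castSucc a (i' u) h3, Fin.val_succ]
    have hval' : ∀ u : Fin r, (j u.succ : ℕ) = (j' u : ℕ) + 1 := by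
      intro u
      have h2 : b < b.succAbove (j' u) := by rw [hj' u]; exact hj (Fin.succ_pos u)
      have h3 : b ≤ Fin.castSucc (j' u) := by
        by_contra hcon
        push_neg at hcon
        rw [Fin.succAbove_of_castSucc_lt b (j' u) hcon] at h2
        exact absurd (h2.trans hcon) (lt_irrefl _)
      rw [← hj' u, Fin.succAbove_of_le_castSucc b (j' u) h3, Fin.val_succ]
    have hsum : ∑ u : Fin (r+1), ((i u : ℕ) + (j u : ℕ)) =
        ((a : ℕ) + (b : ℕ)) + (∑ u : Fin r, ((i' u : ℕ) + (j' u : ℕ)) + 2 * r) := by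
      rw [Fin.sum_univ_succ]
      congr 1
      have heach : ∀ u : Fin r, ((i u.succ : ℕ) + (j u.succ : ℕ)) =
          ((i' u : ℕ) + (j' u : ℕ)) + 2 := by
        intro u; rw [hval u, hval' u]; omega
      rw [Finset.sum_congr rfl (fun u _ => heach u), Finset.sum_add_distrib,
        Finset.sum_const, Finset.card_univ, Fintype.card_fin, smul_eq_mul, mul_comm]
    have hstep : Equiv.Perm.sign τ =
        ((-1 : ℤˣ) ^ (b : ℕ))⁻¹ *
          ((-1 : ℤˣ) ^ (b : ℕ) * (Equiv.Perm.sign τ * (-1 : ℤˣ) ^ (a : ℕ))) *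
          ((-1 : ℤˣ) ^ (a : ℕ))⁻¹ := by
      group
    rw [h] at hstep
    rw [hstep, Int.units_inv_eq_self, Int.units_inv_eq_self, hsum,
      pow_add, pow_add, pow_add, pow_mul, Int.units_sq, one_pow, mul_one]
    rw [mul_comm, ← mul_assoc]

end JacobiAux

/-- Jacobi's identity on minors: for an `(m+1) × (m+1)` matrix `A` over a commutative
ring, strictly increasing row indices `i : Fin r → Fin (m+1)` and column indices
`j : Fin r → Fin (m+1)` with `1 ≤ r ≤ m+1`, and strictly increasing enumerations
`gi, gj` of the complementary rows and columns,
`det A ^ (r-1) * det A_{i₁,…,i_r}^{j₁,…,j_r} = det B`, where `B` is the `r × r`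
matrix with entry `B u v = det A_{i u}^{j v}`. -/
theorem jacobi_identity {R : Type*} [CommRing R] (m r : ℕ) (hr : 1 ≤ r) (hrm : r ≤ m + 1)
    (A : Matrix (Fin (m + 1)) (Fin (m + 1)) R)
    (i j : Fin r → Fin (m + 1)) (hi : StrictMono i) (hj : StrictMono j)
    (gi gj : Fin (m + 1 - r) → Fin (m + 1)) (hgi : StrictMono gi) (hgj : StrictMono gj)
    (hgi' : Set.range gi = (Set.range i)ᶜ) (hgj' : Set.range gj = (Set.range j)ᶜ) :
    A.det ^ (r - 1) * (A.submatrix gi gj).det =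
      (Matrix.of fun u v : Fin r =>
        (A.submatrix (i u).succAbove (j v).succAbove).det).det := by
  classical
  -- the two bijections
  have hbij : ∀ (p : Fin r → Fin (m+1)) (gp : Fin (m+1-r) → Fin (m+1)),
      StrictMono p → StrictMono gp → Set.range gp = (Set.range p)ᶜ →
      Function.Bijective (Sum.elim p gp) := by
    intro p gp hp hgp hgp'
    constructor
    · rintro (u | k) (v | l) h
      · simp only [Sum.elim_inl] at h
        exact congrArg Sum.inl (hp.injective h)
      · simp only [Sum.elim_inl, Sum.elim_inr] at h
        exfalso
        have hmem : gp l ∈ Set.range p := ⟨u, h⟩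
        have hcon : gp l ∈ (Set.range p)ᶜ := hgp' ▸ Set.mem_range_self l
        exact hcon hmem
      · simp only [Sum.elim_inl, Sum.elim_inr] at h
        exfalso
        have hmem : gp k ∈ Set.range p := ⟨v, h.symm⟩
        have hcon : gp k ∈ (Set.range p)ᶜ := hgp' ▸ Set.mem_range_self k
        exact hcon hmem
      · simp only [Sum.elim_inr] at h
        exact congrArg Sum.inr (hgp.injective h)
    · intro x
      by_cases hx : x ∈ Set.range p
      · obtain ⟨u, hu⟩ := hx; exact ⟨Sum.inl u, hu⟩
      · have : x ∈ Set.range gp := by rw [hgp']; exact hx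
        obtain ⟨k, hk⟩ := this; exact ⟨Sum.inr k, hk⟩
  set e : (Fin r ⊕ Fin (m+1-r)) ≃ Fin (m+1) :=
    Equiv.ofBijective _ (hbij i gi hi hgi hgi') with he
  set f : (Fin r ⊕ Fin (m+1-r)) ≃ Fin (m+1) :=
    Equiv.ofBijective _ (hbij j gj hj hgj hgj') with hf
  have he₁ : ∀ u, e (Sum.inl u) = i u := fun u => rfl
  have he₂ : ∀ k, e (Sum.inr k) = gi k := fun k => rfl
  have hf₁ : ∀ u, f (Sum.inl u) = j u := fun u => rfl
  have hf₂ : ∀ k, f (Sum.inr k) = gj k := fun k => rfl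
  set σ : Equiv.Perm (Fin r ⊕ Fin (m+1-r)) := f.trans e.symm with hσ
  set τ : Equiv.Perm (Fin (m+1)) := e.symm.trans f with hτdef
  have hτi : ∀ u, τ (i u) = j u := by
    intro u
    have h1 : e.symm (i u) = Sum.inl u := by
      rw [Equiv.symm_apply_eq]; exact (he₁ u).symm
    simp only [hτdef, Equiv.trans_apply, h1, hf₁]
  have hτg : ∀ k, τ (gi k) = gj k := by
    intro k
    have h1 : e.symm (gi k) = Sum.inr k := by
      rw [Equiv.symm_apply_eq]; exact (he₂ k).symm
    simp only [hτdef, Equiv.trans_apply, h1, hf₂]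
  -- the sign
  have hsignτ : Equiv.Perm.sign τ = (-1) ^ ∑ u, ((i u : ℕ) + (j u : ℕ)) := by
    apply jac_sign_shuffle r i j hi hj τ hτi
    intro x y hx hy hxy
    have hx' : x ∈ Set.range gi := by rw [hgi']; exact hx
    have hy' : y ∈ Set.range gi := by rw [hgi']; exact hy
    obtain ⟨k, rfl⟩ := hx'
    obtain ⟨l, rfl⟩ := hy'
    rw [hτg k, hτg l]
    exact hgj.monotone (hgi.le_iff_le.mp hxy)
  have hsignσ : Equiv.Perm.sign σ = Equiv.Perm.sign τ := by
    have hconj : τ = e.permCongr σ := by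
      ext y
      simp [hσ, hτdef, Equiv.permCongr_apply]
    rw [hconj, Equiv.Perm.sign_permCongr]
  -- determinant of submatrices along e, f
  have hsub : ∀ M : Matrix (Fin (m+1)) (Fin (m+1)) R,
      (M.submatrix ⇑e ⇑f).det = ((Equiv.Perm.sign σ : ℤ) : R) * M.det := by
    intro M
    have h1 : M.submatrix ⇑e ⇑f = (M.submatrix ⇑e ⇑e).submatrix id ⇑σ := by
      ext x y
      simp [Matrix.submatrix_apply, hσ]
    rw [h1, Matrix.det_permute', Matrix.det_submatrix_equiv_self]
  set N := A.submatrix ⇑e ⇑f with hN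
  have hN22 : N.toBlocks₂₂ = A.submatrix gi gj := by
    ext k l; rfl
  have hadj : ∀ u v : Fin r, N.adjugate (Sum.inl u) (Sum.inl v) =
      ((Equiv.Perm.sign σ : ℤ) : R) * A.adjugate (j u) (i v) := by
    intro u v
    rw [Matrix.adjugate_apply, Matrix.adjugate_apply]
    have hup : N.updateRow (Sum.inl v) (Pi.single (Sum.inl u) 1) =
        (A.updateRow (i v) (Pi.single (j u) 1)).submatrix ⇑e ⇑f := by
      ext x y
      rw [Matrix.updateRow_apply, Matrix.submatrix_apply, Matrix.updateRow_apply]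
      have hxe : (e x = i v) ↔ (x = Sum.inl v) := by
        constructor
        · intro h; exact e.injective (h.trans (he₁ v).symm)
        · rintro rfl; exact he₁ v
      have hyf : (f y = j u) ↔ (y = Sum.inl u) := by
        constructor
        · intro h; exact f.injective (h.trans (hf₁ u).symm)
        · rintro rfl; exact hf₁ u
      by_cases hx : x = Sum.inl v
      · rw [if_pos hx, if_pos (hxe.mpr hx), Pi.single_apply, Pi.single_apply]
        exact if_congr hyf.symm rfl rfl
      · rw [if_neg hx, if_neg (fun h => hx (hxe.mp h))]
        rfl
    rw [hup, hsub]
  -- apply the block identity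
  have hmain := jac_block_key' hr N
  rw [hN22] at hmain
  have hCmat : (Matrix.of fun u v : Fin r => N.adjugate (Sum.inl u) (Sum.inl v)) =
      ((Equiv.Perm.sign σ : ℤ) : R) •
        (Matrix.of fun u v : Fin r => A.adjugate (j u) (i v)) := by
    ext u v
    simp [hadj, Matrix.smul_apply, smul_eq_mul]
  rw [hCmat, Matrix.det_smul, Fintype.card_fin, hsub A] at hmain
  set s₀ : R := ((Equiv.Perm.sign σ : ℤ) : R) with hs₀
  set Y : R := (Matrix.of fun u v : Fin r => A.adjugate (j u) (i v)).det with hY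
  -- hmain : (s₀ * A.det) ^ (r-1) * (A.submatrix gi gj).det = s₀ ^ r * Y
  have hs2 : s₀ * s₀ = 1 := by
    rw [hs₀, ← Int.cast_mul, ← Units.val_mul, Int.units_mul_self, Units.val_one, Int.cast_one]
  -- compute det B
  have hB : (Matrix.of fun u v : Fin r =>
      (A.submatrix (i u).succAbove (j v).succAbove).det).det =
      ((-1 : R) ^ ∑ u, ((i u : ℕ) + (j u : ℕ))) * Y := by
    have hentry : ∀ u v : Fin r,
        (A.submatrix (i u).succAbove (j v).succAbove).det =
        (-1 : R) ^ (i u : ℕ) * ((-1 : R) ^ (j v : ℕ) * A.adjugate (j v) (i u)) := by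
      intro u v
      have h1 := Matrix.adjugate_fin_succ_eq_det_submatrix A (j v) (i u)
      rw [h1, ← mul_assoc, ← mul_assoc, ← pow_add, ← pow_add]
      rw [show (i u : ℕ) + (j v : ℕ) + ((i u : ℕ) + (j v : ℕ)) =
        2 * ((i u : ℕ) + (j v : ℕ)) from by ring, pow_mul, neg_one_sq, one_pow, one_mul]
    have hrw : (Matrix.of fun u v : Fin r =>
        (A.submatrix (i u).succAbove (j v).succAbove).det) =
        (Matrix.of fun u v : Fin r => (-1 : R) ^ (i u : ℕ) *
          ((-1 : R) ^ (j v : ℕ) * A.adjugate (j v) (i u))) := by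
      ext u v; exact hentry u v
    have d1 : (Matrix.of fun u v : Fin r => (-1 : R) ^ (i u : ℕ) *
          ((-1 : R) ^ (j v : ℕ) * A.adjugate (j v) (i u))).det
        = (∏ u : Fin r, (-1 : R) ^ (i u : ℕ)) *
          (Matrix.of fun u v : Fin r => (-1 : R) ^ (j v : ℕ) * A.adjugate (j v) (i u)).det :=
      Matrix.det_mul_column _
        (Matrix.of fun u v : Fin r => (-1 : R) ^ (j v : ℕ) * A.adjugate (j v) (i u))
    have d2 : (Matrix.of fun u v : Fin r => (-1 : R) ^ (j v : ℕ) * A.adjugate (j v) (i u)).det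
        = (∏ v : Fin r, (-1 : R) ^ (j v : ℕ)) *
          (Matrix.of fun u v : Fin r => A.adjugate (j v) (i u)).det :=
      Matrix.det_mul_row _ (Matrix.of fun u v : Fin r => A.adjugate (j v) (i u))
    have hT : (Matrix.of fun u v : Fin r => A.adjugate (j v) (i u)).det = Y := by
      rw [hY, ← Matrix.det_transpose]
      congr 1
    rw [hrw, d1, d2, hT, Finset.prod_pow_eq_pow_sum, Finset.prod_pow_eq_pow_sum, ← mul_assoc,
      ← pow_add, ← Finset.sum_add_distrib]
  rw [hB]
  -- identify s₀ with the sign power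
  have hs₀val : s₀ = (-1 : R) ^ ∑ u, ((i u : ℕ) + (j u : ℕ)) := by
    rw [hs₀, hsignσ, hsignτ, Units.val_pow_eq_pow_val, Units.val_neg, Units.val_one,
      Int.cast_pow, Int.cast_neg, Int.cast_one]
  -- final algebra
  rw [mul_pow] at hmain
  have hfin : A.det ^ (r - 1) * (A.submatrix gi gj).det = s₀ * Y := by
    have ht : s₀ ^ (r - 1) * s₀ ^ (r - 1) = 1 := by
      rw [← mul_pow, hs2, one_pow]
    have hmain2 : s₀ ^ (r - 1) * (A.det ^ (r - 1) * (A.submatrix gi gj).det)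
        = s₀ ^ (r - 1) * (s₀ * Y) := by
      calc s₀ ^ (r - 1) * (A.det ^ (r - 1) * (A.submatrix gi gj).det)
          = s₀ ^ (r - 1) * A.det ^ (r - 1) * (A.submatrix gi gj).det := by ring
        _ = s₀ ^ r * Y := hmain
        _ = s₀ ^ ((r - 1) + 1) * Y := by rw [Nat.sub_add_cancel hr]
        _ = s₀ ^ (r - 1) * (s₀ * Y) := by rw [pow_succ]; ring
    calc A.det ^ (r - 1) * (A.submatrix gi gj).det
        = (s₀ ^ (r - 1) * s₀ ^ (r - 1)) * (A.det ^ (r - 1) * (A.submatrix gi gj).det) := by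
          rw [ht, one_mul]
      _ = s₀ ^ (r - 1) * (s₀ ^ (r - 1) * (A.det ^ (r - 1) * (A.submatrix gi gj).det)) := by ring
      _ = s₀ ^ (r - 1) * (s₀ ^ (r - 1) * (s₀ * Y)) := by rw [hmain2]
      _ = (s₀ ^ (r - 1) * s₀ ^ (r - 1)) * (s₀ * Y) := by ring
      _ = s₀ * Y := by rw [ht, one_mul]
  rw [hfin, hs₀val]
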